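/- Let a > c > 0 be reals, k ≥ 1 an integer, and f a probability distribution on {1,…,k}. Set F = Σ_{j=1}^{k} j·f(j)/(j+1), q_s* = (1-F)·(a-c)/(2-F), and q_j* = (a-c)/((j+1)·(2-F)) for each j ∈ {1,…,k}. Then (i) q_s* maximizes over q ∈ ℝ the function q ↦ Σ_{j=1}^{k} f(j)·(a - q - j·q_j* - c)·q, and (ii) for every j ∈ {1,…,k}, q_j* maximizes over q ∈ ℝ the function q ↦ (a - q_s* - (j-1)·q_j* - q - c)·q. -/
import Mathlib


/-- Cournot equilibrium quantities under a probability distribution over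
the number of outside coalitions.  `qs` maximizes the deviant coalition's expected
profit, and `qj j` maximizes each outside coalition's profit under the structure
with `j` coalitions. -/
theorem stmt0 (a c : ℝ) (hc : 0 < c) (hca : c < a) (k : ℕ) (hk : 1 ≤ k)
    (f : ℕ → ℝ) (hf0 : ∀ j ∈ Finset.Icc 1 k, 0 ≤ f j)
    (hf1 : ∑ j ∈ Finset.Icc 1 k, f j = 1)
    (F qs : ℝ) (qj : ℕ → ℝ)
    (hF : F = ∑ j ∈ Finset.Icc 1 k, (j : ℝ) * f j / ((j : ℝ) + 1))
    (hqs : qs = (1 - F) * (a - c) / (2 - F))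
    (hqj : ∀ j ∈ Finset.Icc 1 k, qj j = (a - c) / (((j : ℝ) + 1) * (2 - F))) :
    (∀ q : ℝ,
      ∑ j ∈ Finset.Icc 1 k, f j * (a - q - (j : ℝ) * qj j - c) * q ≤
        ∑ j ∈ Finset.Icc 1 k, f j * (a - qs - (j : ℝ) * qj j - c) * qs) ∧
    (∀ j ∈ Finset.Icc 1 k, ∀ q : ℝ,
      (a - qs - ((j : ℝ) - 1) * qj j - q - c) * q ≤
        (a - qs - ((j : ℝ) - 1) * qj j - qj j - c) * qj j) := by
  have hFle : F ≤ 1 := by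
    rw [hF]
    calc ∑ j ∈ Finset.Icc 1 k, (j : ℝ) * f j / ((j : ℝ) + 1)
        ≤ ∑ j ∈ Finset.Icc 1 k, f j := by
          apply Finset.sum_le_sum
          intro j hj
          have hj1 : (0:ℝ) < (j:ℝ) + 1 := by positivity
          rw [div_le_iff₀ hj1]
          nlinarith [hf0 j hj]
      _ = 1 := hf1
  have h2F : (0:ℝ) < 2 - F := by linarith
  have h2F' : (2:ℝ) - F ≠ 0 := ne_of_gt h2F
  have hS : ∑ j ∈ Finset.Icc 1 k, f j * (a - (j:ℝ) * qj j - c) = 2 * qs := by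
    have hterm : ∀ j ∈ Finset.Icc 1 k, f j * (a - (j:ℝ) * qj j - c)
        = f j * (a - c) - ((a - c) / (2 - F)) * ((j:ℝ) * f j / ((j:ℝ) + 1)) := by
      intro j hj
      rw [hqj j hj]
      have hj1 : ((j:ℝ) + 1) ≠ 0 := by positivity
      field_simp
      ring
    rw [Finset.sum_congr rfl hterm, Finset.sum_sub_distrib, ← Finset.sum_mul, hf1,
      ← Finset.mul_sum, ← hF, hqs]
    field_simp
    ring
  have hsum : ∀ x : ℝ,
      ∑ j ∈ Finset.Icc 1 k, f j * (a - x - (j:ℝ) * qj j - c) * x = 2 * qs * x - x ^ 2 := by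
    intro x
    have hterm : ∀ j ∈ Finset.Icc 1 k, f j * (a - x - (j:ℝ) * qj j - c) * x
        = f j * (a - (j:ℝ) * qj j - c) * x - f j * x ^ 2 := by
      intro j _; ring
    rw [Finset.sum_congr rfl hterm, Finset.sum_sub_distrib, ← Finset.sum_mul, hS,
      ← Finset.sum_mul, hf1]
    ring
  constructor
  · intro q
    rw [hsum q, hsum qs]
    nlinarith [sq_nonneg (q - qs)]
  · intro j hj q
    have hj1 : ((j:ℝ) + 1) ≠ 0 := by positivity
    have h2qj : a - qs - ((j:ℝ) - 1) * qj j - c = 2 * qj j := by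
      rw [hqj j hj, hqs]
      field_simp
      ring
    rw [show a - qs - ((j:ℝ) - 1) * qj j - q - c = 2 * qj j - q from by linarith,
      show a - qs - ((j:ℝ) - 1) * qj j - qj j - c = qj j from by linarith]
    nlinarith [sq_nonneg (q - qj j)]
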